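/- Let H ∈ (1/2, 1) and t > 0. Define e_{s,t}(x₁, x₂) = ∫_0^t ∫_0^t (u - x₁)₊^{H/2 - 1} (v - x₂)₊^{H/2 - 1} |u - s|^{H-1} |v - s|^{H-1} du dv for s ≥ t and (x₁, x₂) ∈ ℝ². Then e_{t,t} ∈ L²(ℝ²), and ‖(1/ε) ∫_t^{t+ε} e_{s,t} ds − e_{t,t}‖_{L²(ℝ²)} → 0 as ε → 0⁺. -/

import Mathlib

open MeasureTheory Filter Set
open scoped ENNReal NNReal

/-- `(x)₊^γ`: `x ^ γ` if `x > 0`, and `0` otherwise. -/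
noncomputable def pospow (x γ : ℝ) : ℝ := if 0 < x then x ^ γ else 0

/-- The kernel `e_{s,t}(x₁,x₂)
  = ∫_0^t ∫_0^t (u-x₁)₊^{H/2-1} (v-x₂)₊^{H/2-1} |u-s|^{H-1} |v-s|^{H-1} du dv`. -/
noncomputable def eKer (H t s : ℝ) (x : ℝ × ℝ) : ℝ :=
  ∫ u in (0:ℝ)..t, ∫ v in (0:ℝ)..t,
    pospow (u - x.1) (H/2 - 1) * pospow (v - x.2) (H/2 - 1)
      * |u - s| ^ (H - 1) * |v - s| ^ (H - 1)

set_option linter.unusedSectionVars false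
set_option linter.unusedVariables false

namespace EKerAux


lemma pospow_nonneg (x γ : ℝ) : 0 ≤ pospow x γ := by
  unfold pospow; split
  · positivity
  · exact le_refl 0

lemma pospow_of_nonpos {x : ℝ} (γ : ℝ) (h : x ≤ 0) : pospow x γ = 0 := by
  unfold pospow; rw [if_neg (not_lt.2 h)]

lemma pospow_of_pos {x : ℝ} (γ : ℝ) (h : 0 < x) : pospow x γ = x ^ γ := if_pos h

lemma measurable_pospow (γ : ℝ) : Measurable fun x : ℝ => pospow x γ := by
  unfold pospow
  exact Measurable.ite measurableSet_Ioi (measurable_id.pow measurable_const) measurable_const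

lemma pospow_anti {γ x y : ℝ} (hγ : γ ≤ 0) (hx : 0 < x) (hxy : x ≤ y) :
    pospow y γ ≤ pospow x γ := by
  rw [pospow_of_pos γ hx, pospow_of_pos γ (hx.trans_le hxy)]
  exact Real.rpow_le_rpow_of_nonpos hx hxy hγ

lemma pospow_eq_indicator (c γ : ℝ) :
    (fun u => pospow (u - c) γ) = (Ioi c).indicator (fun u => (u - c) ^ γ) := by
  funext u
  by_cases h : c < u
  · rw [pospow_of_pos γ (by linarith), indicator_of_mem (mem_Ioi.2 h)]
  · rw [pospow_of_nonpos γ (by linarith), indicator_of_notMem (by simpa using h)]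

lemma intervalIntegrable_pospow {γ : ℝ} (hγ : -1 < γ) (c a b : ℝ) :
    IntervalIntegrable (fun u => pospow (u - c) γ) volume a b := by
  have h1 : IntervalIntegrable (fun u : ℝ => u ^ γ) volume (a - c) (b - c) :=
    intervalIntegral.intervalIntegrable_rpow' hγ
  have h2 : IntervalIntegrable (fun u : ℝ => (u - c) ^ γ) volume a b := by
    simpa using h1.comp_sub_right c
  rw [pospow_eq_indicator]
  exact ⟨h2.1.indicator measurableSet_Ioi, h2.2.indicator measurableSet_Ioi⟩

lemma intervalIntegrable_pospow_rev {γ : ℝ} (hγ : -1 < γ) (c a b : ℝ) :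
    IntervalIntegrable (fun u => pospow (c - u) γ) volume a b := by
  have h1 := (intervalIntegrable_pospow hγ 0 (c - a) (c - b)).comp_sub_left c
  simpa using h1


noncomputable def gA (H t s x : ℝ) : ℝ :=
  ∫ u in (0:ℝ)..t, pospow (u - x) (H/2 - 1) * |u - s| ^ (H - 1)

/-- Version with `|u-s|` replaced by `(s-u)₊`; agrees with `gA` for `s ≥ t`. -/
noncomputable def gP (H t s x : ℝ) : ℝ :=
  ∫ u in (0:ℝ)..t, pospow (u - x) (H/2 - 1) * pospow (s - u) (H - 1)

section
variable {H t : ℝ} (hH : H ∈ Set.Ioo (1/2 : ℝ) 1) (ht : 0 < t)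

lemma eKer_factor (s : ℝ) (x : ℝ × ℝ) :
    eKer H t s x = gA H t s x.1 * gA H t s x.2 := by
  unfold eKer gA
  have h : ∀ u : ℝ,
      (∫ v in (0:ℝ)..t, pospow (u - x.1) (H/2 - 1) * pospow (v - x.2) (H/2 - 1)
        * |u - s| ^ (H - 1) * |v - s| ^ (H - 1))
      = (pospow (u - x.1) (H/2 - 1) * |u - s| ^ (H - 1))
          * ∫ v in (0:ℝ)..t, pospow (v - x.2) (H/2 - 1) * |v - s| ^ (H - 1) := by
    intro u
    rw [← intervalIntegral.integral_const_mul]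
    congr 1; funext v; ring
  simp_rw [h]
  rw [intervalIntegral.integral_mul_const]

include hH ht

lemma gA_eq_gP {s : ℝ} (hs : t ≤ s) (x : ℝ) : gA H t s x = gP H t s x := by
  unfold gA gP
  apply intervalIntegral.integral_congr
  intro u hu
  rw [uIcc_of_le ht.le] at hu
  show pospow (u - x) (H/2 - 1) * |u - s| ^ (H - 1)
      = pospow (u - x) (H/2 - 1) * pospow (s - u) (H - 1)
  rcases lt_or_eq_of_le (hu.2.trans hs) with h | h
  · rw [abs_of_neg (by linarith : u - s < 0), neg_sub,
      ← pospow_of_pos (H - 1) (by linarith : (0:ℝ) < s - u)]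
  · rw [h, sub_self, abs_zero,
      Real.zero_rpow (by intro hc; rw [sub_eq_zero] at hc; exact lt_irrefl 1 (hc ▸ hH.2)),
      pospow_of_nonpos (H - 1) (le_refl (0:ℝ))]

/-- Integrability of the dominating integrand. -/
lemma integrableA (x : ℝ) :
    IntegrableOn (fun u => pospow (u - x) (H/2 - 1) * pospow (t - u) (H - 1))
      (Ioc 0 t) volume := by
  have hγ : (-1:ℝ) < H/2 - 1 := by linarith [hH.1]
  have hβ : (-1:ℝ) < H - 1 := by linarith [hH.1]
  have hβ0 : H - 1 ≤ 0 := by linarith [hH.2]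
  by_cases hx : t ≤ x
  · refine (integrableOn_congr_fun (g := fun _ => (0:ℝ)) ?_ measurableSet_Ioc).2
      (integrableOn_zero)
    intro u hu
    show pospow (u - x) (H/2 - 1) * pospow (t - u) (H - 1) = 0
    rw [pospow_of_nonpos _ (by linarith [hu.2] : u - x ≤ 0), zero_mul]
  · push_neg at hx
    set m : ℝ := max 0 ((x + t)/2) with hm
    have hm0 : 0 ≤ m := le_max_left _ _
    have hmt : m < t := by
      apply max_lt ht
      linarith
    have hxm : x < m := lt_of_lt_of_le (by linarith) (le_max_right _ _)
    have hsplit : Ioc (0:ℝ) t = Ioc 0 m ∪ Ioc m t := (Ioc_union_Ioc_eq_Ioc hm0 hmt.le).symm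
    rw [hsplit]
    apply IntegrableOn.union
    · -- on Ioc 0 m : bound by pospow (u-x) γ * pospow (t-m) β
      have hint : IntegrableOn
          (fun u => pospow (u - x) (H/2 - 1) * pospow (t - m) (H - 1)) (Ioc 0 m) volume :=
        ((intervalIntegrable_pospow hγ x 0 m).1).mul_const _
      apply hint.mono' (by
        exact ((measurable_pospow _).comp (measurable_id.sub_const x) |>.mul
          ((measurable_pospow _).comp (measurable_const.sub measurable_id))).aestronglyMeasurable)
      filter_upwards [ae_restrict_mem measurableSet_Ioc] with u hu
      rw [Real.norm_eq_abs, abs_of_nonneg (mul_nonneg (pospow_nonneg _ _) (pospow_nonneg _ _))]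
      exact mul_le_mul_of_nonneg_left
        (pospow_anti hβ0 (by linarith [hmt] : (0:ℝ) < t - m) (by linarith [hu.2]))
        (pospow_nonneg _ _)
    · -- on Ioc m t : bound by pospow (m-x) γ * pospow (t-u) β
      have hint : IntegrableOn
          (fun u => pospow (m - x) (H/2 - 1) * pospow (t - u) (H - 1)) (Ioc m t) volume :=
        ((intervalIntegrable_pospow_rev hβ t m t).1).const_mul _
      apply hint.mono' (by
        exact ((measurable_pospow _).comp (measurable_id.sub_const x) |>.mul
          ((measurable_pospow _).comp (measurable_const.sub measurable_id))).aestronglyMeasurable)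
      filter_upwards [ae_restrict_mem measurableSet_Ioc] with u hu
      rw [Real.norm_eq_abs, abs_of_nonneg (mul_nonneg (pospow_nonneg _ _) (pospow_nonneg _ _))]
      have hγ0 : H/2 - 1 ≤ 0 := by linarith [hH.2]
      exact mul_le_mul_of_nonneg_right
        (pospow_anti hγ0 (by linarith [hxm] : (0:ℝ) < m - x) (by linarith [hu.1]))
        (pospow_nonneg _ _)

end


lemma gA_nonneg (H t s x : ℝ) (ht : 0 ≤ t) : 0 ≤ gA H t s x := by
  apply intervalIntegral.integral_nonneg ht
  intro u _
  exact mul_nonneg (pospow_nonneg _ _) (Real.rpow_nonneg (abs_nonneg _) _)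

lemma ae_ne_t' (t : ℝ) (s : Set ℝ) : ∀ᵐ u ∂(volume.restrict s), u ≠ t := by
  refine ae_restrict_of_ae ?_
  rw [ae_iff]
  have h : {u : ℝ | ¬ u ≠ t} = {t} := by ext u; simp
  rw [h]
  exact Real.volume_singleton

lemma meas_integrand (H t s x : ℝ) :
    Measurable fun u => pospow (u - x) (H/2 - 1) * pospow (s - u) (H - 1) :=
  ((measurable_pospow _).comp (measurable_id.sub_const x)).mul
    ((measurable_pospow _).comp (measurable_const.sub measurable_id))

variable {H t : ℝ}

lemma integrableP (hH : H ∈ Set.Ioo (1/2 : ℝ) 1) (ht : 0 < t) {s : ℝ} (hs : t ≤ s) (x : ℝ) :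
    IntegrableOn (fun u => pospow (u - x) (H/2 - 1) * pospow (s - u) (H - 1))
      (Ioc 0 t) volume := by
  have hβ0 : H - 1 ≤ 0 := by linarith [hH.2]
  apply (integrableA hH ht x).mono' ((meas_integrand H t s x).aestronglyMeasurable)
  filter_upwards [ae_restrict_mem measurableSet_Ioc, ae_ne_t' t _] with u hu hne
  rw [Real.norm_eq_abs, abs_of_nonneg (mul_nonneg (pospow_nonneg _ _) (pospow_nonneg _ _))]
  have hut : u < t := lt_of_le_of_ne hu.2 hne
  exact mul_le_mul_of_nonneg_left
    (pospow_anti hβ0 (by linarith : (0:ℝ) < t - u) (by linarith)) (pospow_nonneg _ _)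

lemma intervalIntegrableP (hH : H ∈ Set.Ioo (1/2 : ℝ) 1) (ht : 0 < t) {s : ℝ} (hs : t ≤ s)
    (x : ℝ) :
    IntervalIntegrable (fun u => pospow (u - x) (H/2 - 1) * pospow (s - u) (H - 1))
      volume 0 t :=
  (intervalIntegrable_iff_integrableOn_Ioc_of_le ht.le).2 (integrableP hH ht hs x)

lemma gP_le_Gb (hH : H ∈ Set.Ioo (1/2 : ℝ) 1) (ht : 0 < t) {s : ℝ} (hs : t ≤ s) (x : ℝ) :
    gP H t s x ≤ gP H t t x := by
  have hβ0 : H - 1 ≤ 0 := by linarith [hH.2]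
  apply intervalIntegral.integral_mono_ae_restrict ht.le
    (intervalIntegrableP hH ht hs x) (intervalIntegrableP hH ht le_rfl x)
  filter_upwards [ae_ne_t' t _, ae_restrict_mem measurableSet_Icc] with u hne hu
  show pospow (u - x) (H/2-1) * pospow (s - u) (H-1)
      ≤ pospow (u - x) (H/2-1) * pospow (t - u) (H-1)
  have hut : u < t := lt_of_le_of_ne hu.2 hne
  exact mul_le_mul_of_nonneg_left
    (pospow_anti hβ0 (by linarith : (0:ℝ) < t - u) (by linarith)) (pospow_nonneg _ _)

lemma gP_nonneg (hH : H ∈ Set.Ioo (1/2 : ℝ) 1) (ht : 0 < t) {s : ℝ} (hs : t ≤ s) (x : ℝ) :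
    0 ≤ gP H t s x := by
  rw [← gA_eq_gP hH ht hs]
  exact gA_nonneg H t s x ht.le

lemma gP_continuousOn (hH : H ∈ Set.Ioo (1/2 : ℝ) 1) (ht : 0 < t) (x : ℝ) :
    ContinuousOn (fun s => gP H t s x) (Ici t) := by
  intro s₀ hs₀
  have heq : ∀ s : ℝ, gP H t s x
      = ∫ u in Ioc (0:ℝ) t, pospow (u - x) (H/2 - 1) * pospow (s - u) (H - 1) := by
    intro s
    rw [gP, intervalIntegral.integral_of_le ht.le]
  simp_rw [heq]
  apply continuousWithinAt_of_dominated
    (bound := fun u => pospow (u - x) (H/2 - 1) * pospow (t - u) (H - 1))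
  · filter_upwards with s
    exact (meas_integrand H t s x).aestronglyMeasurable
  · filter_upwards [self_mem_nhdsWithin] with s hs
    filter_upwards [ae_restrict_mem measurableSet_Ioc, ae_ne_t' t _] with u hu hne
    rw [Real.norm_eq_abs, abs_of_nonneg (mul_nonneg (pospow_nonneg _ _) (pospow_nonneg _ _))]
    have hut : u < t := lt_of_le_of_ne hu.2 hne
    exact mul_le_mul_of_nonneg_left
      (pospow_anti (by linarith [hH.2] : H - 1 ≤ 0) (by linarith : (0:ℝ) < t - u)
        (sub_le_sub_right hs u)) (pospow_nonneg _ _)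
  · exact integrableA hH ht x
  · filter_upwards [ae_restrict_mem measurableSet_Ioc, ae_ne_t' t _] with u hu hne
    have hut : u < t := lt_of_le_of_ne hu.2 hne
    have h0 : 0 < s₀ - u := by
      have h1 : t ≤ s₀ := hs₀
      linarith
    have hcA : ContinuousAt (fun s => pospow (s - u) (H - 1)) s₀ := by
      have hrpow : ContinuousAt (fun s : ℝ => (s - u) ^ (H - 1)) s₀ :=
        (continuousAt_id.sub continuousAt_const).rpow_const (Or.inl (ne_of_gt h0))
      apply hrpow.congr
      filter_upwards [eventually_gt_nhds (by linarith : u < s₀)] with s hsu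
      rw [pospow_of_pos _ (by linarith)]
    exact (continuousAt_const.mul hcA).continuousWithinAt


lemma meas_gA (H t : ℝ) (ht : 0 ≤ t) : Measurable fun p : ℝ × ℝ => gA H t p.1 p.2 := by
  have heq : (fun p : ℝ × ℝ => gA H t p.1 p.2)
      = fun p : ℝ × ℝ => ∫ u in Ioc (0:ℝ) t,
          pospow (u - p.2) (H/2 - 1) * |u - p.1| ^ (H - 1) ∂volume := by
    funext p
    rw [gA, intervalIntegral.integral_of_le ht]
  rw [heq]
  have hm : StronglyMeasurable fun q : (ℝ × ℝ) × ℝ =>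
      pospow (q.2 - q.1.2) (H/2 - 1) * |q.2 - q.1.1| ^ (H - 1) := by
    apply Measurable.stronglyMeasurable
    exact (((measurable_pospow _).comp (measurable_snd.sub (measurable_fst.snd))).mul
      (((measurable_snd.sub measurable_fst.fst).abs).pow measurable_const))
  exact (hm.integral_prod_right').measurable

lemma meas_gA_x (H t s : ℝ) (ht : 0 ≤ t) : Measurable fun x : ℝ => gA H t s x :=
  (meas_gA H t ht).comp (measurable_const.prodMk measurable_id)


lemma mp_sub_left (c : ℝ) : MeasurePreserving (fun x : ℝ => c - x) volume volume := by
  simpa [sub_eq_add_neg, Function.comp_def] using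
    (measurePreserving_add_left volume c).comp (Measure.measurePreserving_neg volume)

lemma lintegral_reflect (c : ℝ) (f : ℝ → ℝ≥0∞) (s : Set ℝ) :
    ∫⁻ x in s, f (c - x) = ∫⁻ y in (fun x : ℝ => c - x) '' s, f y :=
  (mp_sub_left c).setLIntegral_comp_emb (Homeomorph.subLeft c).measurableEmbedding f s

variable {H : ℝ}

lemma J_core (hH : H ∈ Set.Ioo (1/2 : ℝ) 1) {u u' : ℝ} (hu : u < u') :
    ∫⁻ x : ℝ, ENNReal.ofReal (pospow (u - x) (H/2 - 1))
        * ENNReal.ofReal (pospow (u' - x) (H/2 - 1))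
      ≤ ENNReal.ofReal ((1/(H/2) + 1/(1 - H)) * (u' - u) ^ (H - 1)) := by
  obtain ⟨hH1, hH2⟩ := hH
  set γ : ℝ := H/2 - 1 with hγdef
  set d : ℝ := u' - u with hddef
  have hd : 0 < d := by simp only [hddef]; linarith
  have hγ1 : (-1:ℝ) < γ := by simp only [hγdef]; linarith
  have hγ0 : γ < 0 := by simp only [hγdef]; linarith
  have hγp : 0 < γ + 1 := by linarith
  have h2γlt : 2*γ < -1 := by simp only [hγdef]; linarith
  have h2γ1 : 2*γ + 1 < 0 := by linarith
  -- pointwise bound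
  set I1 : ℝ → ℝ≥0∞ :=
    (Ioo (u-d) u).indicator (fun x => ENNReal.ofReal (d ^ γ * (u - x) ^ γ)) with hI1
  set I2 : ℝ → ℝ≥0∞ :=
    (Iic (u-d)).indicator (fun x => ENNReal.ofReal ((u - x) ^ (2*γ))) with hI2
  have hpt : ∀ x : ℝ, ENNReal.ofReal (pospow (u - x) γ) * ENNReal.ofReal (pospow (u' - x) γ)
      ≤ I1 x + I2 x := by
    intro x
    rcases le_or_gt u x with hxu | hxu
    · rw [pospow_of_nonpos γ (by linarith), ENNReal.ofReal_zero, zero_mul]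
      exact zero_le
    rcases le_or_gt x (u - d) with hx3 | hx2
    · -- x ≤ u - d
      have h1 : 0 < u - x := by linarith
      have h2 : u - x ≤ u' - x := by linarith
      calc ENNReal.ofReal (pospow (u - x) γ) * ENNReal.ofReal (pospow (u' - x) γ)
          ≤ ENNReal.ofReal ((u - x) ^ γ) * ENNReal.ofReal ((u - x) ^ γ) := by
            rw [pospow_of_pos γ h1, pospow_of_pos γ (by linarith)]
            exact mul_le_mul_right (ENNReal.ofReal_le_ofReal
              (Real.rpow_le_rpow_of_nonpos h1 h2 hγ0.le)) _
        _ = ENNReal.ofReal ((u - x) ^ (2*γ)) := by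
            rw [← ENNReal.ofReal_mul (Real.rpow_nonneg h1.le _),
              ← Real.rpow_add h1, show γ + γ = 2*γ by ring]
        _ = I2 x := by rw [hI2, indicator_of_mem (mem_Iic.2 hx3)]
        _ ≤ I1 x + I2 x := le_add_self
    · -- u - d < x < u
      have h1 : 0 < u - x := by linarith
      have h2 : d ≤ u' - x := by simp only [hddef]; linarith
      calc ENNReal.ofReal (pospow (u - x) γ) * ENNReal.ofReal (pospow (u' - x) γ)
          ≤ ENNReal.ofReal ((u - x) ^ γ) * ENNReal.ofReal (d ^ γ) := by
            rw [pospow_of_pos γ h1, pospow_of_pos γ (by linarith)]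
            exact mul_le_mul_right (ENNReal.ofReal_le_ofReal
              (Real.rpow_le_rpow_of_nonpos hd h2 hγ0.le)) _
        _ = ENNReal.ofReal (d ^ γ * (u - x) ^ γ) := by
            rw [← ENNReal.ofReal_mul (Real.rpow_nonneg h1.le _), mul_comm]
        _ = I1 x := by rw [hI1, indicator_of_mem (mem_Ioo.2 ⟨by linarith, hxu⟩)]
        _ ≤ I1 x + I2 x := le_self_add
  have hmeas1 : Measurable I1 := by
    exact ((measurable_const.mul
      ((measurable_const.sub measurable_id).pow measurable_const)).ennreal_ofReal).indicator
      measurableSet_Ioo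
  calc ∫⁻ x : ℝ, ENNReal.ofReal (pospow (u - x) γ) * ENNReal.ofReal (pospow (u' - x) γ)
      ≤ ∫⁻ x, (I1 x + I2 x) := lintegral_mono hpt
    _ = (∫⁻ x, I1 x) + ∫⁻ x, I2 x := lintegral_add_left hmeas1 _
    _ = (∫⁻ x in Ioo (u-d) u, ENNReal.ofReal (d ^ γ * (u - x) ^ γ))
        + ∫⁻ x in Iic (u-d), ENNReal.ofReal ((u - x) ^ (2*γ)) := by
        rw [hI1, hI2, lintegral_indicator measurableSet_Ioo,
          lintegral_indicator measurableSet_Iic]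
    _ = (∫⁻ y in Ioo 0 d, ENNReal.ofReal (d ^ γ * y ^ γ))
        + ∫⁻ y in Ici d, ENNReal.ofReal (y ^ (2*γ)) := by
        rw [lintegral_reflect u (fun y => ENNReal.ofReal (d ^ γ * y ^ γ)) (Ioo (u-d) u),
          lintegral_reflect u (fun y => ENNReal.ofReal (y ^ (2*γ))) (Iic (u-d)),
          image_const_sub_Ioo, image_const_sub_Iic]
        norm_num
    _ = ENNReal.ofReal (∫ y in Ioo 0 d, d ^ γ * y ^ γ)
        + ENNReal.ofReal (∫ y in Ici d, y ^ (2*γ)) := by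
        rw [← ofReal_integral_eq_lintegral_ofReal, ← ofReal_integral_eq_lintegral_ofReal]
        · exact ((integrableOn_Ici_iff_integrableOn_Ioi enorm_ne_top).2
            (integrableOn_Ioi_rpow_of_lt h2γlt hd))
        · filter_upwards [ae_restrict_mem measurableSet_Ici] with y hy
          exact Real.rpow_nonneg (by linarith [mem_Ici.1 hy] : (0:ℝ) ≤ y) _
        · exact (((intervalIntegral.intervalIntegrable_rpow' hγ1 (a := 0) (b := d)).1).mono_set
            Ioo_subset_Ioc_self).const_mul _
        · filter_upwards [ae_restrict_mem measurableSet_Ioo] with y hy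
          exact mul_nonneg (Real.rpow_nonneg hd.le _)
            (Real.rpow_nonneg (le_of_lt (mem_Ioo.1 hy).1) _)
    _ = ENNReal.ofReal (d ^ γ * (d ^ (γ+1) / (γ+1)))
        + ENNReal.ofReal (-d ^ (2*γ+1) / (2*γ+1)) := by
        congr 1
        · congr 1
          rw [integral_const_mul]
          congr 1
          rw [← integral_Ioc_eq_integral_Ioo, ← intervalIntegral.integral_of_le hd.le,
            integral_rpow (Or.inl hγ1), Real.zero_rpow (by linarith : γ + 1 ≠ 0)]
          ring
        · rw [integral_Ici_eq_integral_Ioi, integral_Ioi_rpow_of_lt h2γlt hd]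
    _ ≤ ENNReal.ofReal ((1/(H/2) + 1/(1 - H)) * (u' - u) ^ (H - 1)) := by
        rw [← ENNReal.ofReal_add (by positivity) (by
          rw [neg_div]
          rw [le_neg]
          rw [neg_zero]
          exact div_nonpos_of_nonneg_of_nonpos (Real.rpow_nonneg hd.le _) h2γ1.le)]
        apply ENNReal.ofReal_le_ofReal
        apply le_of_eq
        have h1 : d ^ γ * (d ^ (γ+1) / (γ+1)) = d ^ (2*γ+1) / (γ+1) := by
          rw [show d ^ γ * (d ^ (γ+1) / (γ+1)) = d ^ γ * d ^ (γ+1) / (γ+1) by ring,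
            ← Real.rpow_add hd, show γ + (γ + 1) = 2*γ+1 by ring]
        rw [h1]
        have h2 : (2*γ+1) = H - 1 := by simp only [hγdef]; ring
        have h3 : γ + 1 = H/2 := by simp only [hγdef]; ring
        rw [h2, h3, hddef]
        have h4 : -(u' - u) ^ (H-1) / (H - 1) = (u' - u) ^ (H-1) / (1 - H) := by
          rw [div_eq_div_iff (by intro hc; rw [sub_eq_zero] at hc; exact lt_irrefl 1 (hc ▸ hH2))
            (by intro hc; rw [sub_eq_zero] at hc; exact lt_irrefl 1 (hc.symm ▸ hH2))]
          ring
        rw [h4]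
        ring

lemma J_bound (hH : H ∈ Set.Ioo (1/2 : ℝ) 1) {u u' : ℝ} (hne : u ≠ u') :
    ∫⁻ x : ℝ, ENNReal.ofReal (pospow (u - x) (H/2 - 1))
        * ENNReal.ofReal (pospow (u' - x) (H/2 - 1))
      ≤ ENNReal.ofReal ((1/(H/2) + 1/(1 - H)) * |u - u'| ^ (H - 1)) := by
  rcases hne.lt_or_gt with h | h
  · rw [abs_of_neg (by linarith : u - u' < 0), neg_sub]
    exact J_core hH h
  · rw [abs_of_pos (by linarith : 0 < u - u')]
    calc ∫⁻ x : ℝ, ENNReal.ofReal (pospow (u - x) (H/2 - 1))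
          * ENNReal.ofReal (pospow (u' - x) (H/2 - 1))
        = ∫⁻ x : ℝ, ENNReal.ofReal (pospow (u' - x) (H/2 - 1))
          * ENNReal.ofReal (pospow (u - x) (H/2 - 1)) :=
          lintegral_congr fun x => mul_comm _ _
      _ ≤ ENNReal.ofReal ((1/(H/2) + 1/(1 - H)) * (u - u') ^ (H - 1)) := J_core hH h

lemma pospow_interval_bound (hH : H ∈ Set.Ioo (1/2 : ℝ) 1) (ht : 0 < t) {a b : ℝ}
    (hab : a ≤ b) (hbt : b ≤ t) :
    ∫ w in a..b, pospow w (H - 1) ≤ t ^ H / H := by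
  obtain ⟨hH1, hH2⟩ := hH
  have hβ1 : (-1:ℝ) < H - 1 := by linarith
  have hβ0 : H - 1 ≠ 0 := by intro hc; rw [sub_eq_zero] at hc; exact lt_irrefl 1 (hc ▸ hH2)
  have hHpos : (0:ℝ) < H := by linarith
  have htH : 0 ≤ t ^ H / H := by positivity
  have hint : ∀ p q : ℝ, IntervalIntegrable (fun w => pospow w (H - 1)) volume p q := by
    intro p q; simpa using intervalIntegrable_pospow hβ1 0 p q
  have hcongr0 : ∀ p q : ℝ, q ≤ 0 → p ≤ q → (∫ w in p..q, pospow w (H - 1)) = 0 := by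
    intro p q hq hpq
    rw [intervalIntegral.integral_congr (g := fun _ => 0) ?_, intervalIntegral.integral_zero]
    intro w hw
    rw [uIcc_of_le hpq] at hw
    exact pospow_of_nonpos _ (hw.2.trans hq)
  have hpos_int : ∀ b' : ℝ, 0 < b' → b' ≤ t → (∫ w in (0:ℝ)..b', pospow w (H - 1)) ≤ t ^ H / H := by
    intro b' hb' hb't
    have : (∫ w in (0:ℝ)..b', pospow w (H - 1)) = ∫ w in (0:ℝ)..b', w ^ (H - 1) := by
      apply intervalIntegral.integral_congr
      intro w hw
      rw [uIcc_of_le hb'.le] at hw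
      show pospow w (H - 1) = w ^ (H - 1)
      rcases eq_or_lt_of_le hw.1 with h0 | h0
      · rw [← h0, pospow_of_nonpos _ le_rfl, Real.zero_rpow hβ0]
      · exact pospow_of_pos _ h0
    rw [this, integral_rpow (Or.inl hβ1), Real.zero_rpow (by linarith : H - 1 + 1 ≠ 0), sub_zero,
      show H - 1 + 1 = H by ring]
    exact (div_le_div_iff_of_pos_right hHpos).2 (Real.rpow_le_rpow hb'.le hb't hHpos.le)
  rcases le_or_gt b 0 with hb | hb
  · rw [hcongr0 a b hb hab]; exact htH
  rcases le_or_gt a 0 with ha | ha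
  · rw [← intervalIntegral.integral_add_adjacent_intervals (hint a 0) (hint 0 b),
      hcongr0 a 0 le_rfl ha, zero_add]
    exact hpos_int b hb hbt
  · have h1 : (0:ℝ) ≤ ∫ w in (0:ℝ)..a, pospow w (H - 1) := by
      apply intervalIntegral.integral_nonneg ha.le
      intro w _; exact pospow_nonneg _ _
    have h2 : (∫ w in (0:ℝ)..a, pospow w (H - 1)) + ∫ w in a..b, pospow w (H - 1)
        = ∫ w in (0:ℝ)..b, pospow w (H - 1) :=
      intervalIntegral.integral_add_adjacent_intervals (hint 0 a) (hint a b)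
    have h3 := hpos_int b hb hbt
    linarith

lemma inner_abs_bound (hH : H ∈ Set.Ioo (1/2 : ℝ) 1) (ht : 0 < t) {u : ℝ}
    (hu : u ∈ Ioc (0:ℝ) t) :
    ∫⁻ u' in Ioc (0:ℝ) t, ENNReal.ofReal (|u' - u| ^ (H - 1))
      ≤ ENNReal.ofReal (2 * (t ^ H / H)) := by
  have hβ1 : (-1:ℝ) < H - 1 := by linarith [hH.1]
  have hβ0 : H - 1 ≠ 0 := by intro hc; rw [sub_eq_zero] at hc; exact lt_irrefl 1 (hc ▸ hH.2)
  have hHpos : (0:ℝ) < H := by linarith [hH.1]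
  have hpt : ∀ u' : ℝ, ENNReal.ofReal (|u' - u| ^ (H - 1))
      ≤ ENNReal.ofReal (pospow (u' - u) (H - 1)) + ENNReal.ofReal (pospow (u - u') (H - 1)) := by
    intro u'
    rcases lt_trichotomy u' u with h | h | h
    · rw [abs_of_neg (by linarith : u' - u < 0), neg_sub,
        ← pospow_of_pos (H - 1) (by linarith : (0:ℝ) < u - u')]
      exact le_add_self
    · rw [h, sub_self, abs_zero, Real.zero_rpow hβ0, ENNReal.ofReal_zero]
      exact zero_le
    · rw [abs_of_pos (by linarith : (0:ℝ) < u' - u),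
        ← pospow_of_pos (H - 1) (by linarith : (0:ℝ) < u' - u)]
      exact le_self_add
  calc ∫⁻ u' in Ioc (0:ℝ) t, ENNReal.ofReal (|u' - u| ^ (H - 1))
      ≤ ∫⁻ u' in Ioc (0:ℝ) t, (ENNReal.ofReal (pospow (u' - u) (H - 1))
          + ENNReal.ofReal (pospow (u - u') (H - 1))) := lintegral_mono hpt
    _ = (∫⁻ u' in Ioc (0:ℝ) t, ENNReal.ofReal (pospow (u' - u) (H - 1)))
        + ∫⁻ u' in Ioc (0:ℝ) t, ENNReal.ofReal (pospow (u - u') (H - 1)) :=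
        lintegral_add_left (((measurable_pospow _).comp
          (measurable_id.sub_const u)).ennreal_ofReal) _
    _ ≤ ENNReal.ofReal (t ^ H / H) + ENNReal.ofReal (t ^ H / H) := by
        gcongr
        · rw [← ofReal_integral_eq_lintegral_ofReal
            ((intervalIntegrable_pospow hβ1 u 0 t).1) (by
              filter_upwards with w; exact pospow_nonneg _ _)]
          apply ENNReal.ofReal_le_ofReal
          rw [← intervalIntegral.integral_of_le ht.le,
            intervalIntegral.integral_comp_sub_right (fun w => pospow w (H - 1)) u]
          exact pospow_interval_bound hH ht (by linarith) (by linarith [hu.1])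
        · rw [← ofReal_integral_eq_lintegral_ofReal
            ((intervalIntegrable_pospow_rev hβ1 u 0 t).1) (by
              filter_upwards with w; exact pospow_nonneg _ _)]
          apply ENNReal.ofReal_le_ofReal
          rw [← intervalIntegral.integral_of_le ht.le,
            intervalIntegral.integral_comp_sub_left (fun w => pospow w (H - 1)) u]
          exact pospow_interval_bound hH ht (by linarith) (by linarith [hu.2])
    _ = ENNReal.ofReal (2 * (t ^ H / H)) := by
        rw [← ENNReal.ofReal_add (by positivity) (by positivity), two_mul]


lemma mul_self_add_mul_self (a b : ℝ≥0∞) : a * b ≤ a * a + b * b := by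
  rcases le_total a b with h | h
  · exact le_add_left (mul_le_mul_left h b)
  · exact le_add_right (mul_le_mul_right h a)

lemma Gb_sq_finite (hH : H ∈ Set.Ioo (1/2 : ℝ) 1) (ht : 0 < t) :
    ∫⁻ x : ℝ, ENNReal.ofReal (gP H t t x) * ENNReal.ofReal (gP H t t x) < ⊤ := by
  have hHpos : (0:ℝ) < H := by linarith [hH.1]
  have hβ1 : (-1:ℝ) < H - 1 := by linarith [hH.1]
  have h2β1 : (-1:ℝ) < 2 * (H - 1) := by linarith [hH.1]
  set S : Set ℝ := Ioc (0:ℝ) t with hS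
  set Φ : ℝ → ℝ≥0∞ := fun y => ENNReal.ofReal (pospow y (H/2 - 1)) with hΦ
  set K : ℝ → ℝ≥0∞ := fun u => ENNReal.ofReal (pospow (t - u) (H - 1)) with hK
  have mΦ : Measurable Φ := (measurable_pospow _).ennreal_ofReal
  have mK : Measurable K :=
    ((measurable_pospow _).comp (measurable_const.sub measurable_id)).ennreal_ofReal
  have hΦne : ∀ y, Φ y ≠ ⊤ := fun y => ENNReal.ofReal_ne_top
  have hKne : ∀ u, K u ≠ ⊤ := fun u => ENNReal.ofReal_ne_top
  -- Step 1
  have hfin : ∀ x : ℝ, ENNReal.ofReal (gP H t t x) = ∫⁻ u in S, Φ (u - x) * K u := by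
    intro x
    rw [gP, intervalIntegral.integral_of_le ht.le,
      ofReal_integral_eq_lintegral_ofReal (integrableA hH ht x) (by
        filter_upwards with u
        exact mul_nonneg (pospow_nonneg _ _) (pospow_nonneg _ _))]
    exact lintegral_congr fun u => ENNReal.ofReal_mul (pospow_nonneg _ _)
  have hne : ∀ x : ℝ, (∫⁻ u in S, Φ (u - x) * K u) ≠ ⊤ := fun x => by
    rw [← hfin x]; exact ENNReal.ofReal_ne_top
  set C1 : ℝ≥0∞ := ENNReal.ofReal (1/(H/2) + 1/(1 - H)) with hC1
  set Mb : ℝ≥0∞ := ENNReal.ofReal (2 * (t ^ H / H)) with hMb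
  set W : ℝ → ℝ → ℝ≥0∞ := fun u u' => ENNReal.ofReal (|u - u'| ^ (H - 1)) with hW
  -- Step 2/3: Tonelli
  have key : ∫⁻ x : ℝ, ENNReal.ofReal (gP H t t x) * ENNReal.ofReal (gP H t t x)
      = ∫⁻ u in S, ∫⁻ u' in S, (K u * K u') * ∫⁻ x : ℝ, Φ (u - x) * Φ (u' - x) := by
    have e1 : ∫⁻ x : ℝ, ENNReal.ofReal (gP H t t x) * ENNReal.ofReal (gP H t t x)
        = ∫⁻ x : ℝ, ∫⁻ u in S, ∫⁻ u' in S, (Φ (u - x) * K u) * (Φ (u' - x) * K u') := by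
      apply lintegral_congr
      intro x
      rw [hfin x, ← lintegral_mul_const' _ _ (hne x)]
      apply lintegral_congr
      intro u
      rw [← lintegral_const_mul' _ _ (ENNReal.mul_ne_top (hΦne _) (hKne _))]
    rw [e1]
    have mswap1 : AEMeasurable (Function.uncurry fun x u =>
        ∫⁻ u' in S, (Φ (u - x) * K u) * (Φ (u' - x) * K u'))
        (volume.prod (volume.restrict S)) := by
      apply Measurable.aemeasurable
      apply Measurable.lintegral_prod_right'
        (f := fun q : (ℝ × ℝ) × ℝ => (Φ (q.1.2 - q.1.1) * K q.1.2) * (Φ (q.2 - q.1.1) * K q.2))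
      refine Measurable.mul (f := fun q : (ℝ × ℝ) × ℝ => Φ (q.1.2 - q.1.1) * K q.1.2)
        (g := fun q : (ℝ × ℝ) × ℝ => Φ (q.2 - q.1.1) * K q.2) ?_ ?_
      · exact ((mΦ.comp ((measurable_fst.snd).sub measurable_fst.fst)).mul
          (mK.comp measurable_fst.snd))
      · exact ((mΦ.comp (measurable_snd.sub measurable_fst.fst)).mul (mK.comp measurable_snd))
    rw [lintegral_lintegral_swap mswap1]
    apply lintegral_congr
    intro u
    have mswap2 : AEMeasurable (Function.uncurry fun x u' =>
        (Φ (u - x) * K u) * (Φ (u' - x) * K u')) (volume.prod (volume.restrict S)) := by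
      apply Measurable.aemeasurable
      exact ((mΦ.comp ((measurable_const.sub measurable_fst))).mul
          (measurable_const)).mul
        ((mΦ.comp (measurable_snd.sub measurable_fst)).mul (mK.comp measurable_snd))
    rw [lintegral_lintegral_swap mswap2]
    apply lintegral_congr
    intro u'
    have e2 : ∀ x : ℝ, (Φ (u - x) * K u) * (Φ (u' - x) * K u')
        = (K u * K u') * (Φ (u - x) * Φ (u' - x)) := by intro x; ring
    simp_rw [e2]
    rw [lintegral_const_mul' _ _ (ENNReal.mul_ne_top (hKne _) (hKne _))]
  rw [key]
  -- Step 5: apply J_bound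
  have hC1ge : (0:ℝ) ≤ 1/(H/2) + 1/(1 - H) :=
    add_nonneg (by positivity) (div_nonneg one_pos.le (by linarith [hH.2]))
  have step5 : ∀ u : ℝ, (∫⁻ u' in S, (K u * K u') * ∫⁻ x : ℝ, Φ (u - x) * Φ (u' - x))
      ≤ ∫⁻ u' in S, C1 * ((K u * K u') * W u u') := by
    intro u
    apply lintegral_mono_ae
    have hae : ∀ᵐ u' ∂(volume.restrict S), u' ≠ u := by
      refine ae_restrict_of_ae ?_
      rw [ae_iff]
      have h : {u' : ℝ | ¬ u' ≠ u} = {u} := by ext z; simp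
      rw [h]; exact Real.volume_singleton
    filter_upwards [hae] with u' hneq
    calc (K u * K u') * ∫⁻ x : ℝ, Φ (u - x) * Φ (u' - x)
        ≤ (K u * K u') * (C1 * W u u') := by
          apply mul_le_mul_right
          rw [hC1, hW, ← ENNReal.ofReal_mul hC1ge]
          exact J_bound hH (Ne.symm hneq)
      _ = C1 * ((K u * K u') * W u u') := by ring
  have Wsymm : ∀ a b : ℝ, W a b = W b a := by
    intro a b; rw [hW]; simp only; rw [abs_sub_comm]
  have mW : Measurable (Function.uncurry W) := by
    rw [hW]
    exact (((measurable_fst.sub measurable_snd).abs).pow measurable_const).ennreal_ofReal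
  have mWu : ∀ u, Measurable (W u) := fun u =>
    mW.comp (measurable_const.prodMk measurable_id)
  have mWu' : ∀ u', Measurable (fun u => W u u') := fun u' =>
    mW.comp (measurable_id.prodMk measurable_const)
  -- the inner |·|-integral bound, in terms of W
  have hWint : ∀ u ∈ S, (∫⁻ u' in S, W u u') ≤ Mb := by
    intro u hu
    calc (∫⁻ u' in S, W u u') = ∫⁻ u' in S, ENNReal.ofReal (|u' - u| ^ (H - 1)) :=
        lintegral_congr fun u' => by rw [Wsymm]
      _ ≤ Mb := inner_abs_bound hH ht hu
  have hWint' : ∀ u' ∈ S, (∫⁻ u in S, W u u') ≤ Mb := by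
    intro u' hu'
    exact inner_abs_bound hH ht hu'
  -- finiteness of ∫ K²
  set Q : ℝ≥0∞ := ∫⁻ u in S, K u * K u with hQdef
  have hQ : Q ≠ ⊤ := by
    have hKK : ∀ u : ℝ, K u * K u = ENNReal.ofReal (pospow (t - u) (2*(H-1))) := by
      intro u
      rw [hK]
      simp only
      rw [← ENNReal.ofReal_mul (pospow_nonneg _ _)]
      congr 1
      rcases lt_or_ge 0 (t - u) with hy | hy
      · rw [pospow_of_pos _ hy, pospow_of_pos _ hy, ← Real.rpow_add hy]
        congr 1; ring
      · rw [pospow_of_nonpos _ hy, pospow_of_nonpos _ hy, mul_zero]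
    have : Q = ENNReal.ofReal (∫ u in S, pospow (t - u) (2*(H-1))) := by
      rw [hQdef, ofReal_integral_eq_lintegral_ofReal
        ((intervalIntegrable_pospow_rev h2β1 t 0 t).1)
        (by filter_upwards with u; exact pospow_nonneg _ _)]
      exact lintegral_congr fun u => hKK u
    rw [this]; exact ENNReal.ofReal_ne_top
  have hMbne : Mb ≠ ⊤ := ENNReal.ofReal_ne_top
  have hC1ne : C1 ≠ ⊤ := ENNReal.ofReal_ne_top
  have hKKne : ∀ u u' : ℝ, K u * K u' ≠ ⊤ := fun u u' => ENNReal.mul_ne_top (hKne _) (hKne _)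
  -- T1
  have hT1 : (∫⁻ u in S, ∫⁻ u' in S, (K u * K u) * W u u') ≤ Q * Mb := by
    calc (∫⁻ u in S, ∫⁻ u' in S, (K u * K u) * W u u')
        = ∫⁻ u in S, (K u * K u) * ∫⁻ u' in S, W u u' :=
          lintegral_congr fun u => lintegral_const_mul' _ _ (hKKne u u)
      _ ≤ ∫⁻ u in S, (K u * K u) * Mb :=
          setLIntegral_mono' measurableSet_Ioc fun u hu => mul_le_mul_right (hWint u hu) _
      _ = Q * Mb := lintegral_mul_const' _ _ hMbne
  -- T2 (swap)
  have hT2 : (∫⁻ u in S, ∫⁻ u' in S, (K u' * K u') * W u u') ≤ Q * Mb := by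
    have mjoint : AEMeasurable (Function.uncurry fun u u' => (K u' * K u') * W u u')
        ((volume.restrict S).prod (volume.restrict S)) := by
      apply Measurable.aemeasurable
      exact ((mK.comp measurable_snd).mul (mK.comp measurable_snd)).mul mW
    rw [lintegral_lintegral_swap mjoint]
    calc (∫⁻ u' in S, ∫⁻ u in S, (K u' * K u') * W u u')
        = ∫⁻ u' in S, (K u' * K u') * ∫⁻ u in S, W u u' :=
          lintegral_congr fun u' => lintegral_const_mul' _ _ (hKKne u' u')
      _ ≤ ∫⁻ u' in S, (K u' * K u') * Mb :=
          setLIntegral_mono' measurableSet_Ioc fun u' hu' => mul_le_mul_right (hWint' u' hu') _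
      _ = Q * Mb := lintegral_mul_const' _ _ hMbne
  -- put it together
  calc (∫⁻ u in S, ∫⁻ u' in S, (K u * K u') * ∫⁻ x : ℝ, Φ (u - x) * Φ (u' - x))
      ≤ ∫⁻ u in S, ∫⁻ u' in S, C1 * ((K u * K u') * W u u') := lintegral_mono step5
    _ = C1 * ∫⁻ u in S, ∫⁻ u' in S, (K u * K u') * W u u' := by
        rw [← lintegral_const_mul' C1 _ hC1ne]
        exact lintegral_congr fun u => lintegral_const_mul' C1 _ hC1ne
    _ ≤ C1 * ((∫⁻ u in S, ∫⁻ u' in S, (K u * K u) * W u u')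
          + ∫⁻ u in S, ∫⁻ u' in S, (K u' * K u') * W u u') := by
        apply mul_le_mul_right
        calc (∫⁻ u in S, ∫⁻ u' in S, (K u * K u') * W u u')
            ≤ ∫⁻ u in S, ∫⁻ u' in S, ((K u * K u) * W u u' + (K u' * K u') * W u u') :=
              lintegral_mono fun u => lintegral_mono fun u' => by
                rw [← add_mul]
                exact mul_le_mul_left (mul_self_add_mul_self _ _) _
          _ = (∫⁻ u in S, ((∫⁻ u' in S, (K u * K u) * W u u')
                + ∫⁻ u' in S, (K u' * K u') * W u u')) :=
              lintegral_congr fun u => lintegral_add_left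
                ((measurable_const.mul (mWu u))) _
          _ = _ := lintegral_add_left (by
                apply Measurable.lintegral_prod_right'
                  (f := fun q : ℝ × ℝ => (K q.1 * K q.1) * W q.1 q.2)
                exact (((mK.comp measurable_fst).mul (mK.comp measurable_fst)).mul mW)) _
    _ ≤ C1 * (Q * Mb + Q * Mb) := mul_le_mul_right (add_le_add hT1 hT2) _
    _ < ⊤ := by
        apply lt_top_iff_ne_top.2
        exact ENNReal.mul_ne_top hC1ne
          (ENNReal.add_ne_top.2 ⟨ENNReal.mul_ne_top hQ hMbne, ENNReal.mul_ne_top hQ hMbne⟩)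



end EKerAux

open EKerAux


theorem eKer_average_tendsto_L2 (H : ℝ) (hH : H ∈ Set.Ioo (1/2 : ℝ) 1) (t : ℝ) (ht : 0 < t) :
    MemLp (eKer H t t) 2 (volume : Measure (ℝ × ℝ)) ∧
    Tendsto (fun ε : ℝ =>
        eLpNorm (fun x : ℝ × ℝ =>
          (1 / ε) * (∫ s in t..(t + ε), eKer H t s x) - eKer H t t x) 2
          (volume : Measure (ℝ × ℝ)))
      (nhdsWithin 0 (Set.Ioi 0)) (nhds 0) := by
  set Gb : ℝ → ℝ := fun x => gP H t t x with hGbdef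
  have hGbnn : ∀ x, 0 ≤ Gb x := fun x => gP_nonneg hH ht le_rfl x
  have mGb : Measurable Gb := by
    have h : Gb = fun x => gA H t t x := funext fun x => (gA_eq_gP hH ht le_rfl x).symm
    rw [h]; exact meas_gA_x H t t ht.le
  have hGb2 : ∫⁻ x : ℝ, ENNReal.ofReal (Gb x) * ENNReal.ofReal (Gb x) < ⊤ := Gb_sq_finite hH ht
  have hEfin : ∫⁻ x : ℝ × ℝ, (ENNReal.ofReal (Gb x.1) * ENNReal.ofReal (Gb x.2)) *
        (ENNReal.ofReal (Gb x.1) * ENNReal.ofReal (Gb x.2)) < ⊤ := by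
    have hpt : ∀ x : ℝ × ℝ, (ENNReal.ofReal (Gb x.1) * ENNReal.ofReal (Gb x.2)) *
        (ENNReal.ofReal (Gb x.1) * ENNReal.ofReal (Gb x.2))
        = (ENNReal.ofReal (Gb x.1) * ENNReal.ofReal (Gb x.1))
          * (ENNReal.ofReal (Gb x.2) * ENNReal.ofReal (Gb x.2)) := fun x => by ring
    calc ∫⁻ x : ℝ × ℝ, (ENNReal.ofReal (Gb x.1) * ENNReal.ofReal (Gb x.2)) *
          (ENNReal.ofReal (Gb x.1) * ENNReal.ofReal (Gb x.2))
        = ∫⁻ x : ℝ × ℝ, (ENNReal.ofReal (Gb x.1) * ENNReal.ofReal (Gb x.1))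
          * (ENNReal.ofReal (Gb x.2) * ENNReal.ofReal (Gb x.2)) := lintegral_congr hpt
      _ = (∫⁻ y : ℝ, ENNReal.ofReal (Gb y) * ENNReal.ofReal (Gb y))
          * ∫⁻ y : ℝ, ENNReal.ofReal (Gb y) * ENNReal.ofReal (Gb y) := by
          rw [Measure.volume_eq_prod]
          exact lintegral_prod_mul
            ((mGb.ennreal_ofReal.mul mGb.ennreal_ofReal).aemeasurable)
            ((mGb.ennreal_ofReal.mul mGb.ennreal_ofReal).aemeasurable)
      _ < ⊤ := ENNReal.mul_lt_top hGb2 hGb2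
  have habs : ∀ {s : ℝ}, t ≤ s → ∀ x : ℝ × ℝ, |eKer H t s x| ≤ Gb x.1 * Gb x.2 := by
    intro s hs x
    rw [eKer_factor, gA_eq_gP hH ht hs, gA_eq_gP hH ht hs,
      abs_of_nonneg (mul_nonneg (gP_nonneg hH ht hs _) (gP_nonneg hH ht hs _))]
    exact mul_le_mul (gP_le_Gb hH ht hs x.1) (gP_le_Gb hH ht hs x.2)
      (gP_nonneg hH ht hs x.2) (hGbnn x.1)
  have henorm : ∀ {s : ℝ}, t ≤ s → ∀ x : ℝ × ℝ,
      (‖eKer H t s x‖₊ : ℝ≥0∞) ≤ ENNReal.ofReal (Gb x.1) * ENNReal.ofReal (Gb x.2) := by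
    intro s hs x
    rw [← enorm_eq_nnnorm, Real.enorm_eq_ofReal_abs, ← ENNReal.ofReal_mul (hGbnn x.1)]
    exact ENNReal.ofReal_le_ofReal (habs hs x)
  have meKer : Measurable fun q : (ℝ × ℝ) × ℝ => eKer H t q.2 q.1 := by
    have h : (fun q : (ℝ × ℝ) × ℝ => eKer H t q.2 q.1)
        = fun q => gA H t q.2 q.1.1 * gA H t q.2 q.1.2 :=
      funext fun q => eKer_factor q.2 q.1
    rw [h]
    exact ((meas_gA H t ht.le).comp (measurable_snd.prodMk measurable_fst.fst)).mul
      ((meas_gA H t ht.le).comp (measurable_snd.prodMk measurable_fst.snd))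
  have meKer_t : Measurable (eKer H t t) := by
    have h : eKer H t t = (fun q : (ℝ × ℝ) × ℝ => eKer H t q.2 q.1) ∘ fun x => (x, t) := rfl
    rw [h]
    exact meKer.comp (measurable_id.prodMk measurable_const)
  have sq_eq : ∀ a : ℝ≥0∞, a ^ (2:ℝ) = a * a := by
    intro a
    rw [show (2:ℝ) = ((2:ℕ):ℝ) by norm_num, ENNReal.rpow_natCast]
    ring
  have hmem : MemLp (eKer H t t) 2 (volume : Measure (ℝ × ℝ)) := by
    refine ⟨meKer_t.aestronglyMeasurable, ?_⟩
    rw [eLpNorm_eq_lintegral_rpow_enorm_toReal (by norm_num) (by norm_num)]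
    have htoReal : (2:ℝ≥0∞).toReal = 2 := by norm_num
    rw [htoReal]
    apply ENNReal.rpow_lt_top_of_nonneg (by norm_num)
    apply ne_top_of_le_ne_top hEfin.ne
    apply lintegral_mono
    intro x
    calc (‖eKer H t t x‖₊ : ℝ≥0∞) ^ (2:ℝ)
        ≤ (ENNReal.ofReal (Gb x.1) * ENNReal.ofReal (Gb x.2)) ^ (2:ℝ) :=
          ENNReal.rpow_le_rpow (henorm le_rfl x) (by norm_num)
      _ = (ENNReal.ofReal (Gb x.1) * ENNReal.ofReal (Gb x.2))
          * (ENNReal.ofReal (Gb x.1) * ENNReal.ofReal (Gb x.2)) := sq_eq _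
  refine ⟨hmem, ?_⟩
  -- continuity in s
  have hcont : ∀ x : ℝ × ℝ, ContinuousOn (fun s => eKer H t s x) (Ici t) := by
    intro x
    apply ContinuousOn.congr ((gP_continuousOn hH ht x.1).mul (gP_continuousOn hH ht x.2))
    intro s hs
    show eKer H t s x = gP H t s x.1 * gP H t s x.2
    rw [eKer_factor, gA_eq_gP hH ht hs, gA_eq_gP hH ht hs]
  have hIntS : ∀ (x : ℝ × ℝ) (ε : ℝ), 0 < ε →
      IntervalIntegrable (fun s => eKer H t s x) volume t (t + ε) := by
    intro x ε hε
    apply ContinuousOn.intervalIntegrable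
    apply (hcont x).mono
    rw [uIcc_of_le (by linarith)]
    exact Icc_subset_Ici_self
  have hD : ∀ (ε : ℝ), 0 < ε → ∀ x : ℝ × ℝ,
      (1/ε) * (∫ s in t..(t + ε), eKer H t s x) - eKer H t t x
      = (1/ε) * ∫ s in t..(t + ε), (eKer H t s x - eKer H t t x) := by
    intro ε hε x
    rw [intervalIntegral.integral_sub (hIntS x ε hε) intervalIntegrable_const,
      intervalIntegral.integral_const, show t + ε - t = ε by ring, smul_eq_mul]
    field_simp
  have hDbound : ∀ (ε : ℝ), 0 < ε → ∀ x : ℝ × ℝ,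
      |(1/ε) * (∫ s in t..(t + ε), eKer H t s x) - eKer H t t x|
        ≤ 2 * (Gb x.1 * Gb x.2) := by
    intro ε hε x
    rw [hD ε hε x, abs_mul, abs_of_pos (by positivity : (0:ℝ) < 1/ε)]
    have hnorm : ∀ s ∈ Set.uIoc t (t + ε), ‖eKer H t s x - eKer H t t x‖ ≤ 2 * (Gb x.1 * Gb x.2) := by
      intro s hs
      rw [uIoc_of_le (by linarith : t ≤ t + ε)] at hs
      have hts : t ≤ s := le_of_lt hs.1
      calc ‖eKer H t s x - eKer H t t x‖ ≤ ‖eKer H t s x‖ + ‖eKer H t t x‖ := norm_sub_le _ _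
        _ ≤ Gb x.1 * Gb x.2 + Gb x.1 * Gb x.2 := by
            rw [Real.norm_eq_abs, Real.norm_eq_abs]
            exact add_le_add (habs hts x) (habs le_rfl x)
        _ = 2 * (Gb x.1 * Gb x.2) := by ring
    have h2 := intervalIntegral.norm_integral_le_of_norm_le_const hnorm
    rw [Real.norm_eq_abs, show t + ε - t = ε by ring, abs_of_pos hε] at h2
    calc (1/ε) * |∫ s in t..(t + ε), (eKer H t s x - eKer H t t x)|
        ≤ (1/ε) * (2 * (Gb x.1 * Gb x.2) * ε) :=
          mul_le_mul_of_nonneg_left h2 (by positivity)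
      _ = 2 * (Gb x.1 * Gb x.2) := by field_simp
  have hDlim : ∀ x : ℝ × ℝ, Tendsto (fun ε : ℝ =>
      (1/ε) * (∫ s in t..(t + ε), eKer H t s x) - eKer H t t x)
      (nhdsWithin 0 (Set.Ioi 0)) (nhds 0) := by
    intro x
    rw [NormedAddCommGroup.tendsto_nhds_zero]
    intro η hη
    have hcw : ContinuousWithinAt (fun s => eKer H t s x) (Ici t) t :=
      (hcont x) t self_mem_Ici
    obtain ⟨δ, hδ, hδ'⟩ := Metric.continuousWithinAt_iff.1 hcw (η/2) (by linarith)
    filter_upwards [Ioo_mem_nhdsGT_of_mem (Set.mem_Ico.2 ⟨le_rfl, hδ⟩)] with ε hε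
    obtain ⟨hε0, hεδ⟩ := hε
    rw [Real.norm_eq_abs, hD ε hε0 x, abs_mul, abs_of_pos (by positivity : (0:ℝ) < 1/ε)]
    have hnorm : ∀ s ∈ Set.uIoc t (t + ε), ‖eKer H t s x - eKer H t t x‖ ≤ η/2 := by
      intro s hs
      rw [uIoc_of_le (by linarith : t ≤ t + ε)] at hs
      have h1 : dist s t < δ := by
        rw [Real.dist_eq, abs_of_nonneg (by linarith [hs.1] : (0:ℝ) ≤ s - t)]
        linarith [hs.2]
      have h2 := hδ' (le_of_lt hs.1 : s ∈ Ici t) h1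
      rw [Real.dist_eq] at h2
      rw [Real.norm_eq_abs]
      exact le_of_lt h2
    have h2 := intervalIntegral.norm_integral_le_of_norm_le_const hnorm
    rw [Real.norm_eq_abs, show t + ε - t = ε by ring, abs_of_pos hε0] at h2
    calc (1/ε) * |∫ s in t..(t + ε), (eKer H t s x - eKer H t t x)|
        ≤ (1/ε) * (η/2 * ε) := mul_le_mul_of_nonneg_left h2 (by positivity)
      _ = η/2 := by field_simp
      _ < η := by linarith
  have mD : ∀ (ε : ℝ), 0 < ε → Measurable (fun x : ℝ × ℝ =>
      (1/ε) * (∫ s in t..(t + ε), eKer H t s x) - eKer H t t x) := by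
    intro ε hε
    apply Measurable.sub
    · apply Measurable.const_mul
      have h : (fun x : ℝ × ℝ => ∫ s in t..(t + ε), eKer H t s x)
          = fun x : ℝ × ℝ => ∫ s in Ioc t (t + ε), eKer H t s x ∂volume := by
        funext x; rw [intervalIntegral.integral_of_le (by linarith)]
      rw [h]
      exact (meKer.stronglyMeasurable.integral_prod_right').measurable
    · exact meKer_t
  have hNlim : Tendsto (fun ε : ℝ => ∫⁻ x : ℝ × ℝ,
      (‖(1/ε) * (∫ s in t..(t + ε), eKer H t s x) - eKer H t t x‖₊ : ℝ≥0∞) ^ (2:ℝ))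
      (nhdsWithin 0 (Set.Ioi 0)) (nhds 0) := by
    have h0 : (0:ℝ≥0∞) = ∫⁻ _x : ℝ × ℝ, (0:ℝ≥0∞) := by simp
    rw [h0]
    apply tendsto_lintegral_filter_of_dominated_convergence
      (bound := fun x : ℝ × ℝ => (ENNReal.ofReal (2 * (Gb x.1 * Gb x.2))) ^ (2:ℝ))
    · filter_upwards [self_mem_nhdsWithin] with ε hε
      exact ((mD ε hε).enorm).pow measurable_const
    · filter_upwards [self_mem_nhdsWithin] with ε hε
      apply ae_of_all
      intro x
      apply ENNReal.rpow_le_rpow ?_ (by norm_num)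
      rw [← enorm_eq_nnnorm, Real.enorm_eq_ofReal_abs]
      exact ENNReal.ofReal_le_ofReal (hDbound ε hε x)
    · -- finiteness of the bound
      have hpt : ∀ x : ℝ × ℝ, (ENNReal.ofReal (2 * (Gb x.1 * Gb x.2))) ^ (2:ℝ)
          = 4 * ((ENNReal.ofReal (Gb x.1) * ENNReal.ofReal (Gb x.2))
              * (ENNReal.ofReal (Gb x.1) * ENNReal.ofReal (Gb x.2))) := by
        intro x
        rw [ENNReal.ofReal_mul (by norm_num : (0:ℝ) ≤ 2), ENNReal.ofReal_mul (hGbnn x.1),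
          ENNReal.mul_rpow_of_nonneg _ _ (by norm_num : (0:ℝ) ≤ 2), sq_eq, sq_eq]
        have h4 : ENNReal.ofReal 2 * ENNReal.ofReal 2 = 4 := by
          rw [← ENNReal.ofReal_mul (by norm_num)]
          norm_num
        rw [← h4]
      rw [lintegral_congr hpt, lintegral_const_mul' _ _ (by norm_num : (4:ℝ≥0∞) ≠ ⊤)]
      exact ENNReal.mul_ne_top (by norm_num) hEfin.ne
    · apply ae_of_all
      intro x
      have hc : Tendsto (fun r : ℝ => (‖r‖₊ : ℝ≥0∞) ^ (2:ℝ)) (nhds 0) (nhds 0) := by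
        have hcont2 : Continuous fun r : ℝ => (‖r‖₊ : ℝ≥0∞) ^ (2:ℝ) :=
          ENNReal.continuous_rpow_const.comp (ENNReal.continuous_coe.comp continuous_nnnorm)
        have h00 := hcont2.tendsto 0
        simpa [ENNReal.zero_rpow_of_pos (by norm_num : (0:ℝ) < 2)] using h00
      exact hc.comp (hDlim x)
  have heq : (fun ε : ℝ => eLpNorm (fun x : ℝ × ℝ =>
        (1 / ε) * (∫ s in t..(t + ε), eKer H t s x) - eKer H t t x) 2
        (volume : Measure (ℝ × ℝ)))
      = fun ε : ℝ => (∫⁻ x : ℝ × ℝ,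
        (‖(1/ε) * (∫ s in t..(t + ε), eKer H t s x) - eKer H t t x‖₊ : ℝ≥0∞) ^ (2:ℝ))
          ^ (1/2 : ℝ) := by
    funext ε
    rw [eLpNorm_eq_lintegral_rpow_enorm_toReal (by norm_num) (by norm_num)]
    norm_num
    rfl
  rw [heq]
  have hc2 := (ENNReal.continuous_rpow_const (y := (1/2:ℝ))).tendsto 0
  rw [ENNReal.zero_rpow_of_pos (by norm_num : (0:ℝ) < 1/2)] at hc2
  exact hc2.comp hNlim
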